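/- For α ≥ 1 and β ∈ (−1,0), the Weyl–Titchmarsh m-function m_{0,α,β}(z) = 2^{1+α+β} β (Γ(1+β)/Γ(1−β)) · Γ((1+α−β+σ)/2)Γ((1+α−β−σ)/2) / (Γ((1+α+β+σ)/2)Γ((1+α+β−σ)/2)), with σ = σ_{α,β}(z) = ((1+α+β)²+4z)^{1/2}, has poles (as a function of z ∈ ℂ) precisely at z = (n−β)(n+1+α), n ∈ ℕ₀. -/

import Mathlib

open Filter Complex Finset Topology

/-- `σ_{α,β}(z) = ((1+α+β)² + 4z)^{1/2}` (principal branch). -/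
noncomputable def jacobiSigma (α β : ℝ) (z : ℂ) : ℂ :=
  (((1 : ℂ) + α + β) ^ 2 + 4 * z) ^ ((1 : ℂ) / 2)

/-- The Weyl–Titchmarsh `m`-function `m_{0,α,β}` for `α ≥ 1`, `β ∈ (-1,0)`. -/
noncomputable def jacobiWTm (α β : ℝ) (z : ℂ) : ℂ :=
  (2 : ℂ) ^ ((1 : ℂ) + α + β) * (β : ℂ)
    * (Complex.Gamma (1 + β) / Complex.Gamma (1 - β))
    * (Complex.Gamma ((1 + α - β + jacobiSigma α β z) / 2)
        * Complex.Gamma ((1 + α - β - jacobiSigma α β z) / 2))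
    / (Complex.Gamma ((1 + α + β + jacobiSigma α β z) / 2)
        * Complex.Gamma ((1 + α + β - jacobiSigma α β z) / 2))

lemma Gamma_mul_prod (n : ℕ) (s : ℂ) (h : ∀ k : ℕ, k ≤ n → s + k ≠ 0) :
    Complex.Gamma (s + (n + 1)) = Complex.Gamma s * ∏ k ∈ Finset.range (n + 1), (s + k) := by
  induction n with
  | zero =>
      rw [mul_comm]
      simpa using Complex.Gamma_add_one s (by simpa using h 0 le_rfl)
  | succ n ih =>
      have h1 := ih (fun k hk => h k (hk.trans (Nat.le_succ n)))
      have e1 : s + (↑(n + 1) + 1) = (s + (n + 1)) + 1 := by push_cast; ring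
      have hne : s + (n + 1 : ℕ) ≠ 0 := by
        have := h (n + 1) le_rfl
        simpa using this
      rw [e1, Complex.Gamma_add_one _ (by push_cast at hne ⊢; exact hne),
        Finset.prod_range_succ, h1]
      push_cast
      ring

lemma gamma_pole (n : ℕ) :
    Tendsto (fun s : ℂ => ‖Complex.Gamma s‖) (𝓝[≠] (-(n : ℂ))) atTop := by
  set g : ℂ → ℂ := fun s => Complex.Gamma (s + (n + 1)) / ∏ k ∈ Finset.range n, (s + k) with hg
  have hprod0 : (∏ k ∈ Finset.range n, ((-(n : ℂ)) + k)) ≠ 0 := by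
    refine Finset.prod_ne_zero_iff.2 fun k hk => ?_
    have hk' : k < n := Finset.mem_range.1 hk
    intro h0
    have : (k : ℂ) = (n : ℂ) := by linear_combination h0
    have : (k : ℕ) = n := by exact_mod_cast this
    omega
  have hg0 : g (-(n : ℂ)) ≠ 0 := by
    apply div_ne_zero _ hprod0
    apply Complex.Gamma_ne_zero_of_re_pos
    have : (-(n : ℂ) + (n + 1)) = 1 := by ring
    rw [this]; norm_num
  have hgc : ContinuousAt g (-(n : ℂ)) := by
    apply ContinuousAt.div
    · exact (Complex.differentiableAt_Gamma _ (by
        intro m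
        have : (-(n : ℂ) + (n + 1)) = 1 := by ring
        rw [this]
        intro hc
        have : (1 : ℝ) = -(m : ℝ) := by exact_mod_cast congrArg Complex.re hc
        have := Nat.cast_nonneg (α := ℝ) m
        linarith)).continuousAt.comp (by fun_prop)
    · fun_prop
    · exact hprod0
  have hkey : ∀ᶠ s in 𝓝[≠] (-(n : ℂ)), ‖Complex.Gamma s‖ = ‖g s‖ * ‖s + n‖⁻¹ := by
    have hnb : ∀ᶠ s in 𝓝 (-(n : ℂ)), ∀ k ∈ Finset.range n, s + (k : ℂ) ≠ 0 := by
      rw [eventually_all_finset]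
      intro k hk
      have hk' : k < n := Finset.mem_range.1 hk
      have : ContinuousAt (fun s : ℂ => s + (k : ℂ)) (-(n : ℂ)) := by fun_prop
      apply this.eventually_ne
      intro h0
      have : (k : ℂ) = (n : ℂ) := by linear_combination h0
      have : (k : ℕ) = n := by exact_mod_cast this
      omega
    filter_upwards [nhdsWithin_le_nhds hnb, self_mem_nhdsWithin] with s hs hs'
    have hsn : s + (n : ℂ) ≠ 0 := by
      intro h0
      apply hs'
      simp only [Set.mem_compl_iff, Set.mem_singleton_iff] at *
      linear_combination h0
    have hall : ∀ k : ℕ, k ≤ n → s + k ≠ 0 := by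
      intro k hk
      rcases lt_or_eq_of_le hk with hlt | rfl
      · exact hs k (Finset.mem_range.2 hlt)
      · exact hsn
    have hid : g s = Complex.Gamma s * (s + n) := by
      simp only [hg]
      have hgmp := Gamma_mul_prod n s hall
      rw [hgmp, Finset.prod_range_succ]
      have hp : (∏ k ∈ Finset.range n, (s + k)) ≠ 0 :=
        Finset.prod_ne_zero_iff.2 fun k hk => hs k hk
      field_simp
    rw [hid, norm_mul, mul_assoc, mul_inv_cancel₀ (by simpa using hsn), mul_one]
  have h1 : Tendsto (fun s : ℂ => ‖g s‖) (𝓝[≠] (-(n : ℂ))) (𝓝 ‖g (-(n : ℂ))‖) :=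
    (hgc.norm.tendsto).mono_left nhdsWithin_le_nhds
  have h2 : Tendsto (fun s : ℂ => ‖s + n‖⁻¹) (𝓝[≠] (-(n : ℂ))) atTop := by
    have h3 : Tendsto (fun s : ℂ => ‖s + n‖) (𝓝[≠] (-(n : ℂ))) (𝓝[>] 0) := by
      have := tendsto_norm_sub_self_nhdsNE (-(n : ℂ))
      refine this.congr fun s => by rw [sub_neg_eq_add]
    exact h3.inv_tendsto_nhdsGT_zero
  exact ((h1.pos_mul_atTop (norm_pos_iff.2 hg0) h2).congr' (hkey.mono fun s hs => hs.symm))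

lemma sigma_sq (α β : ℝ) (z : ℂ) :
    (jacobiSigma α β z) ^ 2 = ((1 : ℂ) + α + β) ^ 2 + 4 * z := by
  have h := Complex.cpow_nat_inv_pow (((1 : ℂ) + α + β) ^ 2 + 4 * z)
    (two_ne_zero)
  simpa [jacobiSigma, one_div] using h

lemma sigma_inj (α β : ℝ) {z z' : ℂ}
    (h : jacobiSigma α β z = jacobiSigma α β z') : z = z' := by
  have h1 := sigma_sq α β z
  have h2 := sigma_sq α β z'
  rw [h] at h1
  have h3 : ((1:ℂ)+α+β)^2 + 4*z = ((1:ℂ)+α+β)^2 + 4*z' := by rw [← h1, ← h2]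
  have h4 : (4:ℂ) * z = 4 * z' := by linear_combination h3
  have : (4:ℂ) ≠ 0 := by norm_num
  field_simp at h4
  exact h4

lemma sigma_re_nonneg (α β : ℝ) (z : ℂ) : 0 ≤ (jacobiSigma α β z).re := by
  rw [jacobiSigma]
  set w := ((1:ℂ)+α+β)^2 + 4*z with hw'
  by_cases hw : w = 0
  · rw [hw, Complex.zero_cpow (by norm_num : (1:ℂ)/2 ≠ 0)]
    simp
  · rw [Complex.cpow_def_of_ne_zero hw, Complex.exp_re]
    apply mul_nonneg (Real.exp_nonneg _)
    have him : (Complex.log w * ((1:ℂ)/2)).im = w.arg / 2 := by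
      simp [Complex.mul_im, Complex.log_im]
      ring
    rw [him]
    apply Real.cos_nonneg_of_mem_Icc
    constructor
    · have := Complex.neg_pi_lt_arg w; linarith
    · have := Complex.arg_le_pi w; linarith

lemma re_div_two (z : ℂ) : (z / 2).re = z.re / 2 := by
  rw [show (2:ℂ) = ((2:ℝ):ℂ) by norm_num, Complex.div_ofReal_re]

lemma ne_neg_nat_of_re_pos {s : ℂ} (hs : 0 < s.re) (m : ℕ) : s ≠ -(m:ℂ) := by
  intro h
  have h2 : (-(m:ℂ)).re = -(m:ℝ) := by simp
  rw [h, h2] at hs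
  have := Nat.cast_nonneg (α := ℝ) m
  linarith

lemma frac_ne_neg_nat {x : ℝ} (h0 : -1 < x) (h1 : x < 1) (hx : x ≠ 0) (j m : ℕ) :
    (x:ℂ) - j ≠ -(m:ℂ) := by
  intro h
  have hr : x - (j:ℝ) = -(m:ℝ) := by
    have := congrArg Complex.re h
    simpa using this
  have hz : (j:ℝ) - m = x := by linarith
  have ha : (-1:ℤ) < (j:ℤ) - m := by
    have : (-1:ℝ) < (j:ℝ) - m := by rw [hz]; exact h0
    exact_mod_cast this
  have hb : ((j:ℤ) - m) < 1 := by
    have : ((j:ℝ) - m) < 1 := by rw [hz]; exact h1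
    exact_mod_cast this
  have h5 : j = m := by omega
  apply hx
  rw [← hz, h5, sub_self]

lemma contGamma {s : ℂ} (hs : ∀ m : ℕ, s ≠ -(m:ℂ)) : ContinuousAt Complex.Gamma s :=
  (Complex.differentiableAt_Gamma s hs).continuousAt

/-- for `α ≥ 1`, `β ∈ (-1,0)`, the `m`-function `m_{0,α,β}` has poles
precisely at `z = (n-β)(n+1+α)`, `n ∈ ℕ₀`. -/
theorem jacobiWTm_poles (α β : ℝ) (hα : 1 ≤ α) (hβ : β ∈ Set.Ioo (-1 : ℝ) 0) :
    ∀ z₀ : ℂ, Tendsto (fun z => ‖jacobiWTm α β z‖) (nhdsWithin z₀ {z₀}ᶜ) atTop ↔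
      ∃ n : ℕ, z₀ = ((n : ℂ) - β) * ((n : ℂ) + 1 + α) := by
  intro z₀
  constructor
  · intro ht
    by_contra hex
    push_neg at hex
    have hβ0 := hβ.1
    have hβ1 := hβ.2
    set w₀ : ℂ := ((1:ℂ) + α + β)^2 + 4*z₀ with hw₀
    set sgn : ℝ := if 0 ≤ w₀.im then 1 else -1 with hsgn
    set ε : ℕ → ℝ := fun k => 1/(k+1) with hε
    set zs : ℕ → ℂ := fun k => z₀ + ((sgn * ε k : ℝ) : ℂ) * Complex.I with hzs
    have hεpos : ∀ k, 0 < ε k := fun k => by rw [hε]; positivity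
    have hsgn1 : sgn = 1 ∨ sgn = -1 := by
      rw [hsgn]; split <;> simp
    have hsgnne : sgn ≠ 0 := by rcases hsgn1 with h | h <;> rw [h] <;> norm_num
    have hwk : ∀ k, ((1:ℂ) + α + β)^2 + 4*zs k = w₀ + ((4*sgn*ε k : ℝ):ℂ) * Complex.I := by
      intro k
      rw [hw₀, hzs]
      push_cast
      ring
    have hwkim : ∀ k, (((1:ℂ) + α + β)^2 + 4*zs k).im = w₀.im + 4*sgn*ε k := by
      intro k
      rw [hwk k]
      simp [Complex.add_im, Complex.mul_im]
    have himne : ∀ k, (((1:ℂ) + α + β)^2 + 4*zs k).im ≠ 0 := by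
      intro k
      rw [hwkim k, hsgn]
      split
      · have := hεpos k; next h => nlinarith
      · next h => push_neg at h; nlinarith [hεpos k]
    have hεt : Tendsto ε atTop (𝓝 0) := tendsto_one_div_add_atTop_nhds_zero_nat
    have hzst : Tendsto zs atTop (𝓝[≠] z₀) := by
      rw [tendsto_nhdsWithin_iff]
      constructor
      · have h1 : Tendsto (fun k => sgn * ε k) atTop (𝓝 (sgn * 0)) := hεt.const_mul sgn
        rw [mul_zero] at h1
        have h2 : Tendsto (fun k => ((sgn * ε k : ℝ) : ℂ)) atTop (𝓝 0) := by
          have h2' := (Complex.continuous_ofReal.tendsto 0).comp h1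
          simpa [Function.comp_def] using h2'
        have h3 : Tendsto zs atTop (𝓝 (z₀ + 0 * Complex.I)) := by
          rw [hzs]
          exact tendsto_const_nhds.add (h2.mul_const Complex.I)
        simpa using h3
      · apply Eventually.of_forall
        intro k
        rw [Set.mem_compl_iff, Set.mem_singleton_iff, hzs]
        intro h
        have h2 : ((sgn * ε k : ℝ) : ℂ) * Complex.I = 0 := by linear_combination h
        rcases mul_eq_zero.1 h2 with h3 | h3
        · have : sgn * ε k = 0 := by exact_mod_cast h3
          rcases mul_eq_zero.1 this with h4 | h4
          · exact hsgnne h4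
          · exact (hεpos k).ne' h4
        · exact Complex.I_ne_zero h3
    have hwkt : Tendsto (fun k => ((1:ℂ) + α + β)^2 + 4*zs k) atTop (𝓝 w₀) := by
      have hcont : Continuous (fun z : ℂ => ((1:ℂ) + α + β)^2 + 4*z) := by fun_prop
      have := (hcont.tendsto z₀).comp (hzst.mono_right nhdsWithin_le_nhds)
      rw [hw₀]
      exact this
    -- convergence of sigma along the sequence
    set σ₀ : ℂ := jacobiSigma α β z₀ with hσ₀
    have hσt : Tendsto (fun k => jacobiSigma α β (zs k)) atTop (𝓝 σ₀) := by
      by_cases hcase : 0 ≤ w₀.re ∨ w₀.im ≠ 0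
      · have h1 : ContinuousAt (fun x : ℂ => x ^ ((1:ℂ)/2)) w₀ :=
          Complex.continuousAt_cpow_const_of_re_pos hcase (by norm_num)
        exact h1.tendsto.comp hwkt
      · push_neg at hcase
        obtain ⟨hre, him0⟩ := hcase
        have hw₀ne : w₀ ≠ 0 := fun h => by rw [h] at hre; simp at hre
        have hsgn1' : sgn = 1 := by rw [hsgn, if_pos (le_of_eq him0.symm)]
        have hlogw : ContinuousWithinAt Complex.log {z : ℂ | 0 ≤ z.im} w₀ :=
          Complex.continuousWithinAt_log_of_re_neg_of_im_zero hre him0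
        have hwin : Tendsto (fun k => ((1:ℂ) + α + β)^2 + 4*zs k) atTop
            (𝓝[{z : ℂ | 0 ≤ z.im}] w₀) := by
          rw [tendsto_nhdsWithin_iff]
          refine ⟨hwkt, Eventually.of_forall fun k => ?_⟩
          rw [Set.mem_setOf_eq, hwkim k, him0, hsgn1']
          have := hεpos k
          linarith
        have hlogt : Tendsto (fun k => Complex.log (((1:ℂ) + α + β)^2 + 4*zs k)) atTop
            (𝓝 (Complex.log w₀)) := hlogw.tendsto.comp hwin
        have hexp : Tendsto (fun k => Complex.exp (Complex.log (((1:ℂ) + α + β)^2 + 4*zs k)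
            * ((1:ℂ)/2))) atTop (𝓝 (Complex.exp (Complex.log w₀ * ((1:ℂ)/2)))) :=
          (Complex.continuous_exp.tendsto _).comp (hlogt.mul_const _)
        have heq : ∀ k, jacobiSigma α β (zs k)
            = Complex.exp (Complex.log (((1:ℂ) + α + β)^2 + 4*zs k) * ((1:ℂ)/2)) := by
          intro k
          have hne : ((1:ℂ) + α + β)^2 + 4*zs k ≠ 0 := fun h => himne k (by rw [h]; simp)
          rw [jacobiSigma, Complex.cpow_def_of_ne_zero hne]
        have hv : σ₀ = Complex.exp (Complex.log w₀ * ((1:ℂ)/2)) := by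
          rw [hσ₀, jacobiSigma, ← hw₀, Complex.cpow_def_of_ne_zero hw₀ne]
        rw [hv]
        exact hexp.congr (fun k => (heq k).symm)
    have hσ₀sq : σ₀^2 = w₀ := by rw [hσ₀, hw₀]; exact sigma_sq α β z₀
    have hσ₀re : 0 ≤ σ₀.re := sigma_re_nonneg α β z₀
    have htseq : Tendsto (fun k => ‖jacobiWTm α β (zs k)‖) atTop atTop := ht.comp hzst
    -- no pole of the numerator Gammas at σ₀
    have hp1 : ∀ m : ℕ, ((1:ℂ) + α - β + σ₀)/2 ≠ -(m:ℂ) := by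
      intro m
      apply ne_neg_nat_of_re_pos
      rw [re_div_two]
      have : ((1:ℂ) + α - β + σ₀).re = 1 + α - β + σ₀.re := by
        simp [Complex.add_re, Complex.sub_re]
      rw [this]
      linarith
    have hp3 : ∀ m : ℕ, ((1:ℂ) + α + β + σ₀)/2 ≠ -(m:ℂ) := by
      intro m
      apply ne_neg_nat_of_re_pos
      rw [re_div_two]
      have : ((1:ℂ) + α + β + σ₀).re = 1 + α + β + σ₀.re := by
        simp [Complex.add_re]
      rw [this]
      linarith
    have hp2 : ∀ m : ℕ, ((1:ℂ) + α - β - σ₀)/2 ≠ -(m:ℂ) := by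
      intro m hEq
      apply hex m
      have hσeq : σ₀ = 1 + (α:ℂ) - β + 2*m := by linear_combination (-2:ℂ) * hEq
      have h4 : (1 + (α:ℂ) - β + 2*m)^2 = ((1:ℂ) + α + β)^2 + 4*z₀ := by
        rw [← hσeq, hσ₀sq, hw₀]
      linear_combination (-1/4 : ℂ) * h4
    -- tendsto of the Gamma factors along the sequence
    have haff : ∀ u : ℂ, Tendsto (fun k => (u + jacobiSigma α β (zs k))/2) atTop
        (𝓝 ((u + σ₀)/2)) := fun u =>
      ((hσt.const_add u).div_const 2)
    have haff' : ∀ u : ℂ, Tendsto (fun k => (u - jacobiSigma α β (zs k))/2) atTop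
        (𝓝 ((u - σ₀)/2)) := fun u =>
      ((hσt.const_sub u).div_const 2)
    have hA1 : Tendsto (fun k => Complex.Gamma ((1 + (α:ℂ) - β + jacobiSigma α β (zs k))/2))
        atTop (𝓝 (Complex.Gamma ((1 + (α:ℂ) - β + σ₀)/2))) :=
      (contGamma hp1).tendsto.comp (haff (1 + (α:ℂ) - β))
    have hA2 : Tendsto (fun k => Complex.Gamma ((1 + (α:ℂ) - β - jacobiSigma α β (zs k))/2))
        atTop (𝓝 (Complex.Gamma ((1 + (α:ℂ) - β - σ₀)/2))) :=
      (contGamma hp2).tendsto.comp (haff' (1 + (α:ℂ) - β))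
    have hA3 : Tendsto (fun k => Complex.Gamma ((1 + (α:ℂ) + β + jacobiSigma α β (zs k))/2))
        atTop (𝓝 (Complex.Gamma ((1 + (α:ℂ) + β + σ₀)/2))) :=
      (contGamma hp3).tendsto.comp (haff (1 + (α:ℂ) + β))
    by_cases hp4 : ∀ m : ℕ, ((1:ℂ) + α + β - σ₀)/2 ≠ -(m:ℂ)
    · -- all Gamma factors converge; the m-function converges
      have hA4 : Tendsto (fun k => Complex.Gamma ((1 + (α:ℂ) + β - jacobiSigma α β (zs k))/2))
          atTop (𝓝 (Complex.Gamma ((1 + (α:ℂ) + β - σ₀)/2))) :=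
        (contGamma hp4).tendsto.comp (haff' (1 + (α:ℂ) + β))
      have hdenne : Complex.Gamma ((1 + (α:ℂ) + β + σ₀)/2)
          * Complex.Gamma ((1 + (α:ℂ) + β - σ₀)/2) ≠ 0 :=
        mul_ne_zero (Complex.Gamma_ne_zero hp3) (Complex.Gamma_ne_zero hp4)
      have hlim : Tendsto (fun k => jacobiWTm α β (zs k)) atTop
          (𝓝 ((2 : ℂ) ^ ((1 : ℂ) + α + β) * (β : ℂ)
            * (Complex.Gamma (1 + β) / Complex.Gamma (1 - β))
            * (Complex.Gamma ((1 + (α:ℂ) - β + σ₀)/2) * Complex.Gamma ((1 + (α:ℂ) - β - σ₀)/2))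
            / (Complex.Gamma ((1 + (α:ℂ) + β + σ₀)/2)
              * Complex.Gamma ((1 + (α:ℂ) + β - σ₀)/2)))) := by
        simp only [jacobiWTm]
        exact (tendsto_const_nhds.mul (hA1.mul hA2)).div (hA3.mul hA4) hdenne
      exact not_tendsto_atTop_of_tendsto_nhds hlim.norm htseq
    · -- denominator Gamma blows up: the m-function tends to 0
      push_neg at hp4
      obtain ⟨m, hm4⟩ := hp4
      set G : ℂ → ℂ := fun s => (2 : ℂ) ^ ((1 : ℂ) + α + β) * (β : ℂ)
        * (Complex.Gamma (1 + β) / Complex.Gamma (1 - β))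
        * (Complex.Gamma ((1 + α - β + s) / 2) * Complex.Gamma ((1 + α - β - s) / 2))
        / Complex.Gamma ((1 + α + β + s) / 2) with hG
      have hΓ3ne : Complex.Gamma ((1 + (α:ℂ) + β + σ₀)/2) ≠ 0 :=
        Complex.Gamma_ne_zero hp3
      have hGt : Tendsto (fun k => G (jacobiSigma α β (zs k))) atTop (𝓝 (G σ₀)) := by
        rw [hG]
        exact (tendsto_const_nhds.mul (hA1.mul hA2)).div hA3 hΓ3ne
      have hval : ∀ z, ‖jacobiWTm α β z‖ = ‖G (jacobiSigma α β z)‖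
          * ‖Complex.Gamma ((1 + (α:ℂ) + β - jacobiSigma α β z)/2)‖⁻¹ := by
        intro z
        rw [jacobiWTm, hG]
        simp only [norm_div, norm_mul]
        ring
      have hArg : Tendsto (fun k => (1 + (α:ℂ) + β - jacobiSigma α β (zs k))/2) atTop
          (𝓝[≠] (-(m:ℂ))) := by
        rw [tendsto_nhdsWithin_iff]
        constructor
        · rw [← hm4]
          exact haff' (1 + (α:ℂ) + β)
        · apply Eventually.of_forall
          intro k
          rw [Set.mem_compl_iff, Set.mem_singleton_iff]
          intro hk
          have hσk : jacobiSigma α β (zs k) = ((1 + α + β + 2*m : ℝ):ℂ) := by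
            push_cast
            linear_combination (-2:ℂ) * hk
          have h2 := sigma_sq α β (zs k)
          rw [hσk] at h2
          apply himne k
          rw [← h2]
          simp only [← Complex.ofReal_pow, Complex.ofReal_im]
      have hΓinv : Tendsto
          (fun k => ‖Complex.Gamma ((1 + (α:ℂ) + β - jacobiSigma α β (zs k))/2)‖⁻¹)
          atTop (𝓝 0) := ((gamma_pole m).comp hArg).inv_tendsto_atTop
      have hfin : Tendsto (fun k => ‖jacobiWTm α β (zs k)‖) atTop (𝓝 (‖G σ₀‖ * 0)) :=
        (hGt.norm.mul hΓinv).congr (fun k => (hval (zs k)).symm)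
      exact not_tendsto_atTop_of_tendsto_nhds hfin htseq
  · rintro ⟨n, hn⟩
    subst hn
    set z₀ : ℂ := ((n : ℂ) - β) * ((n : ℂ) + 1 + α) with hz₀
    set c : ℂ := 1 + α - β + 2 * n with hc
    have hβ0 := hβ.1
    have hβ1 := hβ.2
    have hnn : (0:ℝ) ≤ n := Nat.cast_nonneg n
    have hc2 : c ^ 2 = ((1:ℂ) + α + β) ^ 2 + 4 * z₀ := by
      rw [hc, hz₀]; ring
    have hcR : c = ((1 + α - β + 2*n : ℝ) : ℂ) := by rw [hc]; push_cast; ring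
    have hcre : 0 < c.re := by
      rw [hcR, Complex.ofReal_re]; linarith
    have hσz₀ : jacobiSigma α β z₀ = c := by
      show (((1 : ℂ) + α + β) ^ 2 + 4 * z₀) ^ ((1 : ℂ) / 2) = c
      rw [← hc2, one_div]
      exact Complex.sq_cpow_two_inv hcre
    have hwre : 0 ≤ (((1:ℂ)+α+β)^2 + 4*z₀).re := by
      rw [← hc2, hcR, ← Complex.ofReal_pow, Complex.ofReal_re]
      positivity
    have hσt : Tendsto (jacobiSigma α β) (𝓝[≠] z₀) (𝓝 c) := by
      have h1 : ContinuousAt (fun x : ℂ => x ^ ((1:ℂ)/2)) (((1:ℂ)+α+β)^2 + 4*z₀) :=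
        Complex.continuousAt_cpow_const_of_re_pos (Or.inl hwre) (by norm_num)
      have hw : Tendsto (fun z : ℂ => ((1:ℂ)+α+β)^2 + 4*z) (𝓝[≠] z₀)
          (𝓝 (((1:ℂ)+α+β)^2 + 4*z₀)) := by
        apply Continuous.continuousWithinAt; fun_prop
      have h2 := h1.tendsto.comp hw
      rw [← hσz₀]
      exact h2
    -- the pole factor argument
    have hargT : Tendsto (fun z => (1 + (α:ℂ) - β - jacobiSigma α β z)/2)
        (𝓝[≠] z₀) (𝓝[≠] (-(n:ℂ))) := by
      rw [tendsto_nhdsWithin_iff]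
      constructor
      · have hcn : (1 + (α:ℂ) - β - c)/2 = -(n:ℂ) := by rw [hc]; ring
        rw [← hcn]
        exact ((continuous_const.sub continuous_id).div_const 2).continuousAt.tendsto.comp hσt
      · filter_upwards [self_mem_nhdsWithin] with z hz
        intro hEq
        rw [Set.mem_singleton_iff] at hEq
        apply hz
        have hσc : jacobiSigma α β z = c := by rw [hc]; linear_combination (-2 : ℂ) * hEq
        have := sigma_inj α β (hσc.trans hσz₀.symm)
        exact Set.mem_singleton_iff.mpr this
    have hΓpole : Tendsto (fun z => ‖Complex.Gamma ((1 + (α:ℂ) - β - jacobiSigma α β z)/2)‖)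
        (𝓝[≠] z₀) atTop := (gamma_pole n).comp hargT
    -- the remaining factor
    set G : ℂ → ℂ := fun s => (2 : ℂ) ^ ((1 : ℂ) + α + β) * (β : ℂ)
      * (Complex.Gamma (1 + β) / Complex.Gamma (1 - β))
      * Complex.Gamma ((1 + α - β + s) / 2)
      / (Complex.Gamma ((1 + α + β + s) / 2) * Complex.Gamma ((1 + α + β - s) / 2)) with hG
    have e1 : ((1:ℂ) + α - β + c)/2 = ((1 + α - β + n : ℝ) : ℂ) := by
      rw [hc]; push_cast; ring
    have e3 : ((1:ℂ) + α + β + c)/2 = ((1 + α + n : ℝ) : ℂ) := by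
      rw [hc]; push_cast; ring
    have e4 : ((1:ℂ) + α + β - c)/2 = ((β:ℝ):ℂ) - n := by
      rw [hc]; push_cast; ring
    have hΓ1ne : Complex.Gamma (((1:ℂ) + α - β + c)/2) ≠ 0 := by
      apply Complex.Gamma_ne_zero_of_re_pos
      rw [e1, Complex.ofReal_re]; linarith
    have hΓ3ne : Complex.Gamma (((1:ℂ) + α + β + c)/2) ≠ 0 := by
      apply Complex.Gamma_ne_zero_of_re_pos
      rw [e3, Complex.ofReal_re]; linarith
    have hβnat : ∀ m : ℕ, ((β:ℝ):ℂ) - n ≠ -(m:ℂ) :=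
      fun m => frac_ne_neg_nat hβ0 (by linarith) (by linarith) n m
    have hΓ4ne : Complex.Gamma (((1:ℂ) + α + β - c)/2) ≠ 0 := by
      rw [e4]; exact Complex.Gamma_ne_zero hβnat
    have hKne : (2 : ℂ) ^ ((1 : ℂ) + α + β) * (β : ℂ)
        * (Complex.Gamma (1 + β) / Complex.Gamma (1 - β)) ≠ 0 := by
      apply mul_ne_zero
      apply mul_ne_zero
      · rw [Complex.cpow_def_of_ne_zero two_ne_zero]
        exact Complex.exp_ne_zero _
      · exact Complex.ofReal_ne_zero.2 (by linarith)
      · apply div_ne_zero <;> apply Complex.Gamma_ne_zero_of_re_pos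
        · simp only [Complex.add_re, Complex.one_re, Complex.ofReal_re]; linarith
        · simp only [Complex.sub_re, Complex.one_re, Complex.ofReal_re]; linarith
    have hGne : G c ≠ 0 := by
      rw [hG]
      exact div_ne_zero (mul_ne_zero hKne hΓ1ne) (mul_ne_zero hΓ3ne hΓ4ne)
    have hGcont : ContinuousAt G c := by
      rw [hG]
      apply ContinuousAt.div
      · apply ContinuousAt.mul continuousAt_const
        exact (contGamma (fun m => by
          rw [e1]; exact ne_neg_nat_of_re_pos (by rw [Complex.ofReal_re]; linarith) m)).comp
          (by fun_prop)
      · apply ContinuousAt.mul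
        · exact (contGamma (fun m => by
            rw [e3]; exact ne_neg_nat_of_re_pos (by rw [Complex.ofReal_re]; linarith) m)).comp
            (by fun_prop)
        · exact (contGamma (fun m => by rw [e4]; exact hβnat m)).comp (by fun_prop)
      · exact mul_ne_zero hΓ3ne hΓ4ne
    have hGt : Tendsto (fun z => ‖G (jacobiSigma α β z)‖) (𝓝[≠] z₀) (𝓝 ‖G c‖) :=
      (hGcont.tendsto.comp hσt).norm
    have hval : ∀ z, ‖jacobiWTm α β z‖
        = ‖G (jacobiSigma α β z)‖ * ‖Complex.Gamma ((1 + (α:ℂ) - β - jacobiSigma α β z)/2)‖ := by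
      intro z
      rw [jacobiWTm, hG]
      simp only [norm_div, norm_mul]
      ring
    have := hGt.pos_mul_atTop (norm_pos_iff.2 hGne) hΓpole
    exact this.congr (fun z => (hval z).symm)
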